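/- Assumptions and notation as in the Section 4 construction: (W,S) is an irreducible Coxeter system of finite rank with m_{st} < ∞ for all s,t ∈ S, whose Coxeter graph G is not a tree, with fixed s_1, s_2 ∈ S such that m := m_{s_1s_2} ≥ 4; p : G′ → G is the universal covering with fixed edge {s_1′, s_2′} over {s_1, s_2}, and V = ⊕_{a∈S′} ℂ α_a is the resulting representation of W. Let V_0 := {v ∈ V : s·v = v for all s ∈ S}, let d(a,b) denote the distance between vertices a,b in the tree G′, let S_1′ := {a ∈ S′ : d(a,s_1′) < d(a,s_2′)}, and let V_1 := ⊕_{a∈S_1′} ℂ α_a. If m = 4, then V_1 is a W-subrepresentation of V, and for every v_1 ∈ V_1 ∖ V_0 the W-subrepresentation generated by v_1 is all of V_1. -/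

import Mathlib

/-- The Coxeter graph of a Coxeter matrix `M`: two distinct vertices `s, t` are adjacent iff
`M s t ≥ 3` or `M s t = ∞` (encoded as `0` in Mathlib), i.e. iff `M s t ≠ 2`. -/
def coxeterGraph {B : Type*} (M : CoxeterMatrix B) : SimpleGraph B where
  Adj s t := s ≠ t ∧ M s t ≠ 2
  symm := by
    constructor
    intro s t h
    exact ⟨h.1.symm, by rw [M.symmetric]; exact h.2⟩
  loopless := by constructor; intro s h; exact h.1 rfl

open Finsupp Classical in
/-- The Section 4 operators: for each `s ∈ S`, a linear operator on `V = ⊕_{a ∈ S′} ℂ α_a`,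
where `S′` is the vertex set of the universal covering `p : G′ → G` of the Coxeter graph `G`,
and `α_a = Finsupp.single a 1`.  Here `{s₁′, s₂′}` is the fixed edge of `G′` over the edge
`{s₁, s₂}` of `G` (with `m = m_{s₁s₂} ≥ 4`).  The defining formulas are:
(i) if `p a = s` then `s·α_a = −α_a`;
(ii) `s₁·α_{s₂′} = α_{s₂′} + 2cos(2π/m) α_{s₁′}` and `s₂·α_{s₁′} = α_{s₁′} + 2cos(2π/m) α_{s₂′}`;
(iii) otherwise, if `s` is not adjacent to `p a` in `G` (equivalently, under the covering
hypotheses, `a` has no neighbour in `G′` lying over `s`), then `s·α_a = α_a`;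
(iv) otherwise `s·α_a = α_a + 2cos(π/m_{s,p(a)}) α_b`, where `b` is the unique neighbour of `a`
in `G′` with `p b = s`. -/
noncomputable def sec4Act {B B' : Type*} (M : CoxeterMatrix B) (G' : SimpleGraph B')
    (p : B' → B) (s₁ s₂ : B) (s₁' s₂' : B') (s : B) : (B' →₀ ℂ) →ₗ[ℂ] (B' →₀ ℂ) :=
  Finsupp.lift _ ℂ _ fun a =>
    if p a = s then -single a 1
    else if s = s₁ ∧ a = s₂' then
      single s₂' 1 + (2 * Real.cos (2 * Real.pi / (M s₁ s₂ : ℝ)) : ℂ) • single s₁' 1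
    else if s = s₂ ∧ a = s₁' then
      single s₁' 1 + (2 * Real.cos (2 * Real.pi / (M s₁ s₂ : ℝ)) : ℂ) • single s₂' 1
    else if h : ∃ b, G'.Adj a b ∧ p b = s then
      single a 1 + (2 * Real.cos (Real.pi / (M s (p a) : ℝ)) : ℂ) • single h.choose 1
    else single a 1

/-- The subspace of vectors fixed by all the operators `σ s`. -/
def fixedSubmodule {B V : Type*} [AddCommGroup V] [Module ℂ V]
    (σ : B → V →ₗ[ℂ] V) : Submodule ℂ V where
  carrier := {v | ∀ s, σ s v = v}
  add_mem' := by
    intro a b ha hb s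
    simp [map_add, ha s, hb s]
  zero_mem' := by intro s; simp
  smul_mem' := by
    intro c a ha s
    simp [map_smul, ha s]

open SimpleGraph Finsupp

private lemma S7_eval_sub {B' : Type*} (L : (B' →₀ ℂ) →ₗ[ℂ] (B' →₀ ℂ)) (w : B' →₀ ℂ) (x : B') :
    (L w) x - w x =
      ∑ b ∈ w.support, w b * ((L (Finsupp.single b 1)) x - (Finsupp.single b 1 : B' →₀ ℂ) x) := by
  have h1 : (L w) x = ∑ b ∈ w.support, w b * (L (Finsupp.single b 1)) x := by
    conv_lhs => rw [← Finsupp.sum_single w, Finsupp.sum]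
    rw [map_sum, Finsupp.finset_sum_apply]
    refine Finset.sum_congr rfl fun b _ => ?_
    rw [← Finsupp.smul_single_one b (w b), map_smul, Finsupp.smul_apply, smul_eq_mul]
  have h2 : w x = ∑ b ∈ w.support, w b * (Finsupp.single b 1 : B' →₀ ℂ) x := by
    conv_lhs => rw [← Finsupp.sum_single w, Finsupp.sum]
    rw [Finsupp.finset_sum_apply]
    refine Finset.sum_congr rfl fun b _ => ?_
    rw [← Finsupp.smul_single_one b (w b), Finsupp.smul_apply, smul_eq_mul]
  rw [h1, h2, ← Finset.sum_sub_distrib]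
  exact Finset.sum_congr rfl fun b _ => by ring

private lemma S7_toward {B' : Type*} {G' : SimpleGraph B'} (hconn : G'.Connected)
    {a r : B'} (h : a ≠ r) :
    ∃ c, G'.Adj a c ∧ G'.dist c r + 1 = G'.dist a r := by
  obtain ⟨Q₀, hQ₀⟩ := hconn.exists_walk_length_eq_dist a r
  have hpos : 0 < Q₀.length := by rw [hQ₀]; exact hconn.pos_dist_of_ne h
  cases Q₀ with
  | nil => simp at hpos
  | @cons _ c _ hac q =>
    refine ⟨c, hac, ?_⟩
    have h1 : G'.dist c r ≤ q.length := SimpleGraph.dist_le q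
    have h2 : G'.dist a r ≤ G'.dist a c + G'.dist c r := hconn.dist_triangle
    have h3 : G'.dist a c ≤ 1 := by
      simpa using SimpleGraph.dist_le (Walk.cons hac Walk.nil)
    rw [SimpleGraph.Walk.length_cons] at hQ₀
    omega

private lemma S7_tree_cut {B' : Type*} {G' : SimpleGraph B'} (htree : G'.IsTree)
    {s₁' s₂' a b : B'} (hedge : G'.Adj s₁' s₂') (hab : G'.Adj a b)
    (ha : G'.dist a s₁' < G'.dist a s₂') (hb : ¬ G'.dist b s₁' < G'.dist b s₂') :
    a = s₁' ∧ b = s₂' := by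
  classical
  have hconn := htree.isConnected
  push_neg at hb
  obtain ⟨Q, hQpath, hQlen⟩ : ∃ Q : G'.Walk a s₁', Q.IsPath ∧ Q.length = G'.dist a s₁' := by
    obtain ⟨Q₀, hQ₀⟩ := hconn.exists_walk_length_eq_dist a s₁'
    exact ⟨Q₀.bypass, Q₀.bypass_isPath,
      le_antisymm (by rw [← hQ₀]; exact Q₀.length_bypass_le) (SimpleGraph.dist_le _)⟩
  obtain ⟨R, hRpath, hRlen⟩ : ∃ R : G'.Walk b s₂', R.IsPath ∧ R.length = G'.dist b s₂' := by
    obtain ⟨R₀, hR₀⟩ := hconn.exists_walk_length_eq_dist b s₂'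
    exact ⟨R₀.bypass, R₀.bypass_isPath,
      le_antisymm (by rw [← hR₀]; exact R₀.length_bypass_le) (SimpleGraph.dist_le _)⟩
  have hd21 : 0 < G'.dist s₂' s₁' := hconn.pos_dist_of_ne hedge.ne.symm
  have hs2Q : s₂' ∉ Q.support := by
    intro hs
    have h1 : G'.dist a s₂' ≤ (Q.takeUntil s₂' hs).length := SimpleGraph.dist_le _
    have h2 : G'.dist s₂' s₁' ≤ (Q.dropUntil s₂' hs).length := SimpleGraph.dist_le _
    have h3 : (Q.takeUntil s₂' hs).length + (Q.dropUntil s₂' hs).length = Q.length := by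
      have h := congrArg SimpleGraph.Walk.length (Q.take_spec hs)
      rw [SimpleGraph.Walk.length_append] at h
      exact h
    omega
  have haR : a ∉ R.support := by
    intro hs
    have h1 : G'.dist b a ≤ (R.takeUntil a hs).length := SimpleGraph.dist_le _
    have h2 : G'.dist a s₂' ≤ (R.dropUntil a hs).length := SimpleGraph.dist_le _
    have h3 : (R.takeUntil a hs).length + (R.dropUntil a hs).length = R.length := by
      have h := congrArg SimpleGraph.Walk.length (R.take_spec hs)
      rw [SimpleGraph.Walk.length_append] at h
      exact h
    have h4 : 0 < G'.dist b a := hconn.pos_dist_of_ne hab.ne'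
    have h5 : G'.dist b s₁' ≤ G'.dist b a + G'.dist a s₁' := hconn.dist_triangle
    have h6 : G'.dist b a ≤ 1 := by
      simpa using SimpleGraph.dist_le (Walk.cons hab.symm Walk.nil)
    omega
  have hW1 : (Walk.cons hedge.symm Q.reverse).IsPath := by
    rw [SimpleGraph.Walk.cons_isPath_iff]
    refine ⟨hQpath.reverse, ?_⟩
    rw [SimpleGraph.Walk.support_reverse, List.mem_reverse]
    exact hs2Q
  have hW2 : ((Walk.cons hab R).reverse).IsPath := by
    rw [SimpleGraph.Walk.isPath_reverse_iff, SimpleGraph.Walk.cons_isPath_iff]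
    exact ⟨hRpath, haR⟩
  have hEq : Walk.cons hedge.symm Q.reverse = (Walk.cons hab R).reverse :=
    (htree.existsUnique_path s₂' a).unique hW1 hW2
  have hEq' : Q.append (Walk.cons hedge Walk.nil) = Walk.cons hab R := by
    have h := congrArg SimpleGraph.Walk.reverse hEq
    rw [SimpleGraph.Walk.reverse_reverse, SimpleGraph.Walk.reverse_cons,
      SimpleGraph.Walk.reverse_reverse] at h
    convert h using 2
  have hlen : G'.dist b s₂' = G'.dist a s₁' := by
    have h := congrArg SimpleGraph.Walk.length hEq'
    simp [SimpleGraph.Walk.length_append] at h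
    omega
  rcases Nat.eq_zero_or_pos Q.length with h0 | hpos2
  · have ha1 : a = s₁' := by
      have hz : G'.dist a s₁' = 0 := by rw [← hQlen, h0]
      exact (hconn.dist_eq_zero_iff).mp hz
    have hgv := congrArg (fun W => SimpleGraph.Walk.getVert W 1) hEq'
    simp only [SimpleGraph.Walk.getVert_append, h0] at hgv
    norm_num at hgv
    exact ⟨ha1, hgv.symm⟩
  · exfalso
    have hnn : ¬ Q.Nil := by
      rw [SimpleGraph.Walk.not_nil_iff_lt_length]; exact hpos2
    have hre := Q.cons_tail_eq hnn
    have htl : Q.tail.length + 1 = Q.length := by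
      have h := congrArg SimpleGraph.Walk.length hre
      simpa using h
    have hdt : G'.dist (Q.getVert 1) s₁' ≤ Q.tail.length := SimpleGraph.dist_le Q.tail
    have hb1 : b = Q.getVert 1 := by
      have hgv := congrArg (fun W => SimpleGraph.Walk.getVert W 1) hEq'
      simp only [SimpleGraph.Walk.getVert_append] at hgv
      by_cases h1 : 1 < Q.length
      · rw [if_pos h1] at hgv
        simpa using hgv.symm
      · have hq1 : Q.length = 1 := by omega
        rw [if_neg h1, hq1] at hgv
        norm_num at hgv
        rw [← hgv, ← hq1]
        exact Q.getVert_length.symm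
    have hdt' : G'.dist b s₁' ≤ Q.tail.length := by rw [hb1]; exact hdt
    omega

private lemma S7_coeff_pos {B : Type*} (M : CoxeterMatrix B) (hfin : ∀ s t : B, M s t ≠ 0)
    {s t : B} (h : (coxeterGraph M).Adj s t) :
    0 < Real.cos (Real.pi / (M s t : ℝ)) := by
  have h1 : M s t ≠ 1 := M.off_diagonal s t h.1
  have h3 : 3 ≤ M s t := by have h2 := h.2; have h0 := hfin s t; omega
  have h3' : (3 : ℝ) ≤ (M s t : ℝ) := by exact_mod_cast h3
  apply Real.cos_pos_of_mem_Ioo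
  constructor
  · have hp1 : 0 < Real.pi / (M s t : ℝ) := by positivity
    have hp2 : 0 < Real.pi / 2 := by positivity
    linarith
  · exact div_lt_div_of_pos_left Real.pi_pos (by norm_num) (by linarith)

open Finsupp Classical in
private lemma S7_sec4Act_single {B B' : Type*} (M : CoxeterMatrix B) (G' : SimpleGraph B')
    (p : B' → B) (s₁ s₂ : B) (s₁' s₂' : B') (s : B) (a : B') :
    sec4Act M G' p s₁ s₂ s₁' s₂' s (single a 1) =
      (if p a = s then -single a 1
      else if s = s₁ ∧ a = s₂' then
        single s₂' 1 + (2 * Real.cos (2 * Real.pi / (M s₁ s₂ : ℝ)) : ℂ) • single s₁' 1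
      else if s = s₂ ∧ a = s₁' then
        single s₁' 1 + (2 * Real.cos (2 * Real.pi / (M s₁ s₂ : ℝ)) : ℂ) • single s₂' 1
      else if h : ∃ b, G'.Adj a b ∧ p b = s then
        single a 1 + (2 * Real.cos (Real.pi / (M s (p a) : ℝ)) : ℂ) • single h.choose 1
      else single a 1) := by
  simp only [sec4Act, Finsupp.lift_apply]
  refine (Finsupp.sum_single_index ?_).trans ?_
  · exact zero_smul ℂ _
  · exact one_smul ℂ _


/-- under the Section 4 assumptions, with `ρ` the resulting representation of `W`
on `V = B' →₀ ℂ`, `V₀ = {v ∈ V : s·v = v for all s ∈ S}`,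
`S₁′ = {a ∈ S′ : d(a,s₁′) < d(a,s₂′)}` (distances in the tree `G′`) and
`V₁ = ⊕_{a ∈ S₁′} ℂ α_a`: if `m = m_{s₁s₂} = 4`, then `V₁` is a `W`-subrepresentation of `V`,
and for every `v₁ ∈ V₁ ∖ V₀` the `W`-subrepresentation generated by `v₁` is all of `V₁`. -/
theorem statement7 {B B' W : Type*} [Group W] [Fintype B]
    (M : CoxeterMatrix B) (cs : CoxeterSystem M W)
    (hfin : ∀ s t : B, M s t ≠ 0)
    (hconn : (coxeterGraph M).Connected)
    (hnottree : ¬ (coxeterGraph M).IsTree)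
    (s₁ s₂ : B) (hm : 4 ≤ M s₁ s₂)
    (G' : SimpleGraph B') (htree : G'.IsTree) (p : B' → B)
    (hmorph : ∀ a b : B', G'.Adj a b → (coxeterGraph M).Adj (p a) (p b))
    (hsurj : Function.Surjective p)
    (hcover : ∀ a : B', Set.BijOn p (G'.neighborSet a) ((coxeterGraph M).neighborSet (p a)))
    (s₁' s₂' : B') (hedge : G'.Adj s₁' s₂') (hp₁ : p s₁' = s₁) (hp₂ : p s₂' = s₂)
    (ρ : Representation ℂ W (B' →₀ ℂ))
    (hρ : ∀ s : B, ρ (cs.simple s) = sec4Act M G' p s₁ s₂ s₁' s₂' s)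
    (hm4 : M s₁ s₂ = 4) :
    (∀ w : W, ∀ v ∈ Finsupp.supported ℂ ℂ {a : B' | G'.dist a s₁' < G'.dist a s₂'},
      ρ w v ∈ Finsupp.supported ℂ ℂ {a : B' | G'.dist a s₁' < G'.dist a s₂'}) ∧
    ∀ v₁ ∈ Finsupp.supported ℂ ℂ {a : B' | G'.dist a s₁' < G'.dist a s₂'},
      v₁ ∉ fixedSubmodule (sec4Act M G' p s₁ s₂ s₁' s₂') →
      Submodule.span ℂ {u | ∃ w : W, ρ w v₁ = u} =
        Finsupp.supported ℂ ℂ {a : B' | G'.dist a s₁' < G'.dist a s₂'} := by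
  classical
  have hconn' := htree.isConnected
  set Sset := {a : B' | G'.dist a s₁' < G'.dist a s₂'} with hSs
  set σs := sec4Act M G' p s₁ s₂ s₁' s₂' with hσs
  have hρσ : ∀ s, ρ (cs.simple s) = σs s := fun s => by rw [hσs]; exact hρ s
  have hGadj : (coxeterGraph M).Adj s₁ s₂ := by rw [← hp₁, ← hp₂]; exact hmorph _ _ hedge
  have hs12 : s₁ ≠ s₂ := hGadj.1
  have injnbr : ∀ a b c : B', G'.Adj a b → G'.Adj a c → p b = p c → b = c :=
    fun a b c h1 h2 h3 => (hcover a).injOn h1 h2 h3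
  have exnbr : ∀ (a : B') (t : B), (coxeterGraph M).Adj (p a) t →
      ∃ b, G'.Adj a b ∧ p b = t := by
    intro a t ht
    obtain ⟨b, hb, hb'⟩ := (hcover a).surjOn ht
    exact ⟨b, hb, hb'⟩
  have memS : ∀ x : B', x ∈ Sset ↔ G'.dist x s₁' < G'.dist x s₂' := fun x => Iff.rfl
  have s2nmem : s₂' ∉ Sset := by
    rw [memS, SimpleGraph.dist_self]
    omega
  have s1mem : s₁' ∈ Sset := by
    rw [memS, SimpleGraph.dist_self]
    exact hconn'.pos_dist_of_ne hedge.ne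
  have stay : ∀ a b : B', a ∈ Sset → G'.Adj a b → ¬(a = s₁' ∧ b = s₂') → b ∈ Sset := by
    intro a b ha hab hne
    by_contra hb
    exact hne (S7_tree_cut htree hedge hab ((memS a).mp ha) (fun hc => hb ((memS b).mpr hc)))
  have sig_cut : σs s₂ (single s₁' (1:ℂ)) = single s₁' 1 := by
    rw [hσs, S7_sec4Act_single, if_neg (by rw [hp₁]; exact hs12),
      if_neg (by rintro ⟨h, -⟩; exact hs12 h.symm), if_pos ⟨rfl, rfl⟩]
    have h4 : (2 * Real.pi / (M s₁ s₂ : ℝ)) = Real.pi / 2 := by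
      rw [hm4]; push_cast; ring
    rw [h4, Real.cos_pi_div_two]
    norm_num
  have edge_act : ∀ a b : B', a ∈ Sset → b ∈ Sset → G'.Adj a b →
      ∃ c : ℂ, c ≠ 0 ∧ σs (p b) (single a (1:ℂ)) = single a 1 + c • single b 1 := by
    intro a b ha hb hab
    have hpapb : p a ≠ p b := (hmorph a b hab).1
    have hex : ∃ b', G'.Adj a b' ∧ p b' = p b := ⟨b, hab, rfl⟩
    have h2 : ¬(p b = s₁ ∧ a = s₂') := by
      rintro ⟨-, ha2⟩; rw [ha2] at ha; exact s2nmem ha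
    have h3 : ¬(p b = s₂ ∧ a = s₁') := by
      rintro ⟨hpb2, ha1⟩
      rw [ha1] at hab
      have hb2 : b = s₂' := injnbr s₁' b s₂' hab hedge (by rw [hpb2, hp₂])
      rw [hb2] at hb
      exact s2nmem hb
    refine ⟨(2 * Real.cos (Real.pi / (M (p b) (p a) : ℝ)) : ℂ), ?_, ?_⟩
    · have hcp := S7_coeff_pos M hfin (hmorph a b hab).symm
      exact mul_ne_zero two_ne_zero (Complex.ofReal_ne_zero.mpr (ne_of_gt hcp))
    · rw [hσs, S7_sec4Act_single, if_neg hpapb, if_neg h2, if_neg h3, dif_pos hex]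
      have hch : hex.choose = b :=
        injnbr a hex.choose b hex.choose_spec.1 hab hex.choose_spec.2
      rw [hch]
  have master : ∀ s : B, ∀ a ∈ Sset,
      (p a = s ∧ σs s (single a (1:ℂ)) = -single a 1) ∨
      (σs s (single a (1:ℂ)) = single a 1) ∨
      (∃ c : ℂ, c ≠ 0 ∧ ∃ b, p b = s ∧ b ∈ Sset ∧
        σs s (single a (1:ℂ)) = single a 1 + c • single b 1) := by
    intro s a ha
    by_cases h1 : p a = s
    · exact Or.inl ⟨h1, by rw [hσs, S7_sec4Act_single, if_pos h1]⟩
    have h2 : ¬(s = s₁ ∧ a = s₂') := by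
      rintro ⟨-, ha2⟩; rw [ha2] at ha; exact s2nmem ha
    by_cases h3 : s = s₂ ∧ a = s₁'
    · obtain ⟨h3a, h3b⟩ := h3
      rw [h3a, h3b]
      exact Or.inr (Or.inl sig_cut)
    by_cases h4 : ∃ b, G'.Adj a b ∧ p b = s
    · refine Or.inr (Or.inr ?_)
      obtain ⟨b, hb, hpb⟩ := h4
      have hbS : b ∈ Sset := by
        refine stay a b ha hb ?_
        rintro ⟨ha1, hb2⟩
        exact h3 ⟨by rw [← hpb, hb2, hp₂], ha1⟩
      obtain ⟨c, hc0, hceq⟩ := edge_act a b ha hbS hb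
      rw [hpb] at hceq
      exact ⟨c, hc0, b, hpb, hbS, hceq⟩
    · refine Or.inr (Or.inl ?_)
      rw [hσs, S7_sec4Act_single, if_neg h1, if_neg h2, if_neg h3, dif_neg h4]
  have inv : ∀ s : B, ∀ v, v ∈ Finsupp.supported ℂ ℂ Sset →
      σs s v ∈ Finsupp.supported ℂ ℂ Sset := by
    intro s v hv
    rw [Finsupp.supported_eq_span_single] at hv
    have goal : σs s v ∈ Finsupp.supported ℂ ℂ Sset := by
      induction hv using Submodule.span_induction with
      | mem x hx =>
        obtain ⟨a, haS, rfl⟩ := hx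
        rcases master s a haS with ⟨-, heq⟩ | heq | ⟨c, -, b, -, hbS, heq⟩
        · rw [heq]; exact Submodule.neg_mem _ (Finsupp.single_mem_supported ℂ 1 haS)
        · rw [heq]; exact Finsupp.single_mem_supported ℂ 1 haS
        · rw [heq]
          exact Submodule.add_mem _ (Finsupp.single_mem_supported ℂ 1 haS)
            (Submodule.smul_mem _ c (Finsupp.single_mem_supported ℂ 1 hbS))
      | zero => rw [map_zero]; exact Submodule.zero_mem _
      | add x y hx hy ihx ihy => rw [map_add]; exact Submodule.add_mem _ ihx ihy
      | smul c x hx ihx => rw [map_smul]; exact Submodule.smul_mem _ c ihx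
    exact goal
  have part1 : ∀ g : W, ∀ v ∈ Finsupp.supported ℂ ℂ Sset,
      ρ g v ∈ Finsupp.supported ℂ ℂ Sset := by
    intro g
    obtain ⟨l, rfl⟩ := cs.wordProd_surjective g
    induction l with
    | nil =>
      intro v hv
      rw [CoxeterSystem.wordProd_nil, map_one]
      exact hv
    | cons i l ih =>
      intro v hv
      rw [CoxeterSystem.wordProd_cons, map_mul, Module.End.mul_apply, hρσ i]
      exact inv i _ (ih v hv)
  refine ⟨part1, ?_⟩
  intro v₁ hv₁ hnfix
  set U := Submodule.span ℂ {u | ∃ w : W, ρ w v₁ = u} with hU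
  have hUinv : ∀ s : B, ∀ v, v ∈ U → σs s v ∈ U := by
    intro s v hv
    rw [hU] at hv
    have goal : σs s v ∈ U := by
      induction hv using Submodule.span_induction with
      | mem x hx =>
        obtain ⟨g, rfl⟩ := hx
        refine Submodule.subset_span ⟨cs.simple s * g, ?_⟩
        rw [map_mul, Module.End.mul_apply, hρσ s]
      | zero => rw [map_zero]; exact Submodule.zero_mem _
      | add x y hx hy ihx ihy => rw [map_add]; exact Submodule.add_mem _ ihx ihy
      | smul c x hx ihx => rw [map_smul]; exact Submodule.smul_mem _ c ihx
    exact goal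
  have hv₁U : v₁ ∈ U := Submodule.subset_span ⟨1, by rw [map_one]; rfl⟩
  have hv₁S : ∀ x ∈ v₁.support, x ∈ Sset := by
    intro x hx
    exact (Finsupp.mem_supported ℂ v₁).mp hv₁ hx
  have hns : ∃ s, σs s v₁ ≠ v₁ := by
    by_contra h
    push_neg at h
    exact hnfix h
  obtain ⟨s₀, hs₀⟩ := hns
  -- the step lemma
  have step : ∀ (t : B) (w : B' →₀ ℂ) (z : B' → B') (c : B' → ℂ), w ∈ U →
      (∀ b ∈ w.support, σs t (single b (1:ℂ)) - single b 1 = c b • single (z b) 1) →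
      (σs t w - w ∈ U) ∧
      (∀ x : B', (σs t w - w) x ≠ 0 → ∃ b ∈ w.support, c b ≠ 0 ∧ z b = x) ∧
      (∀ b₀ ∈ w.support, (∀ b ∈ w.support, c b ≠ 0 → z b = z b₀ → b = b₀) →
        (σs t w - w) (z b₀) = w b₀ * c b₀) := by
    intro t w z c hwU hrep
    have heval : ∀ x, (σs t w - w) x =
        ∑ b ∈ w.support, w b * (c b * (single (z b) (1:ℂ) x)) := by
      intro x
      rw [Finsupp.sub_apply, S7_eval_sub]
      refine Finset.sum_congr rfl fun b hb => ?_
      have h' : (σs t (single b (1:ℂ))) x - (single b (1:ℂ) : B' →₀ ℂ) x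
          = (c b • single (z b) (1:ℂ) : B' →₀ ℂ) x := by
        rw [← Finsupp.sub_apply, hrep b hb]
      rw [h', Finsupp.smul_apply, smul_eq_mul]
    refine ⟨Submodule.sub_mem U (hUinv t w hwU) hwU, ?_, ?_⟩
    · intro x hx
      by_contra hcon
      push_neg at hcon
      apply hx
      rw [heval]
      apply Finset.sum_eq_zero
      intro b hb
      by_cases hcb : c b = 0
      · rw [hcb]; ring
      · rw [Finsupp.single_apply, if_neg (hcon b hb hcb)]; ring
    · intro b₀ hb₀ hinj
      rw [heval]
      rw [Finset.sum_eq_single_of_mem b₀ hb₀]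
      · rw [Finsupp.single_apply, if_pos rfl]; ring
      · intro b hb hne
        by_cases hcb : c b = 0
        · rw [hcb]; ring
        · rw [Finsupp.single_apply, if_neg (fun h => hne (hinj b hb hcb h))]; ring
  -- the reduction
  have reduce : ∀ n D : ℕ, ∀ s : B, ∀ w : B' →₀ ℂ, w ∈ U → w ≠ 0 →
      (∀ x ∈ w.support, p x = s ∧ x ∈ Sset) → w.support.card = n →
      (∀ x ∈ w.support, D ≤ G'.dist x s₁') → (∃ x ∈ w.support, G'.dist x s₁' = D) →
      ∃ b ∈ Sset, single b (1:ℂ) ∈ U := by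
    intro n
    induction n using Nat.strong_induction_on with
    | _ n ihn =>
    intro D
    induction D using Nat.strong_induction_on with
    | _ D ihD =>
    intro s w hwU hw0 hsupp hcard hmin hex
    rcases Nat.lt_or_ge n 2 with hn2 | hn2
    · have hne : w.support.Nonempty := Finsupp.support_nonempty_iff.mpr hw0
      have hpos := Finset.card_pos.mpr hne
      have hcard1 : w.support.card = 1 := by omega
      obtain ⟨a, b0, hb0, haw⟩ := Finsupp.card_support_eq_one'.mp hcard1
      have hamem : a ∈ w.support := by
        rw [haw, Finsupp.support_single_ne_zero a hb0]
        exact Finset.mem_singleton_self a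
      have haS : a ∈ Sset := (hsupp a hamem).2
      refine ⟨a, haS, ?_⟩
      have heq : single a (1:ℂ) = b0⁻¹ • w := by
        rw [haw, Finsupp.smul_single, smul_eq_mul, inv_mul_cancel₀ hb0]
      rw [heq]
      exact Submodule.smul_mem U _ hwU
    · obtain ⟨b₁, hb₁mem, hb₁D⟩ := hex
      have hb₁S := (hsupp b₁ hb₁mem).2
      have hpb₁ : p b₁ = s := (hsupp b₁ hb₁mem).1
      rcases Nat.eq_zero_or_pos D with hD0 | hDpos
      · -- D = 0 : s₁' is in the support, fiber is s₁, apply σ s₂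
        subst hD0
        have hb₁eq : b₁ = s₁' := (hconn'.dist_eq_zero_iff).mp hb₁D
        have hs1'mem : s₁' ∈ w.support := hb₁eq ▸ hb₁mem
        have hs : s = s₁ := by rw [← hpb₁, hb₁eq, hp₁]
        have hzc : ∀ b : B', ∃ zc : B' × ℂ, b ∈ w.support →
            (σs s₂ (single b (1:ℂ)) - single b 1 = zc.2 • single zc.1 1) ∧
            (b ≠ s₁' → zc.2 ≠ 0 ∧ G'.Adj b zc.1 ∧ p zc.1 = s₂ ∧ zc.1 ∈ Sset) ∧
            (b = s₁' → zc.2 = 0) := by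
          intro b
          by_cases hbmem : b ∈ w.support
          · by_cases hbs : b = s₁'
            · refine ⟨(s₁', 0), fun _ => ⟨?_, fun h => absurd hbs h, fun _ => rfl⟩⟩
              rw [hbs, sig_cut]
              simp
            · have hbS := (hsupp b hbmem).2
              have hpb : p b = s₁ := hs ▸ (hsupp b hbmem).1
              obtain ⟨b', hb'adj, hb'p⟩ := exnbr b s₂ (by rw [hpb]; exact hGadj)
              have hb'S : b' ∈ Sset := stay b b' hbS hb'adj (fun h => hbs h.1)
              obtain ⟨cc, hcc0, hcceq⟩ := edge_act b b' hbS hb'S hb'adj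
              rw [hb'p] at hcceq
              refine ⟨(b', cc), fun _ => ⟨?_, fun _ => ⟨hcc0, hb'adj, hb'p, hb'S⟩,
                fun h => absurd h hbs⟩⟩
              rw [hcceq]
              abel
          · exact ⟨(b, 0), fun h => absurd h hbmem⟩
        choose zc hzc' using hzc
        obtain ⟨hstep1, hstep2, hstep3⟩ :=
          step s₂ w (fun b => (zc b).1) (fun b => (zc b).2) hwU (fun b hb => (hzc' b hb).1)
        obtain ⟨b₂, hb₂mem, hb₂ne⟩ := Finset.exists_mem_ne (s := w.support) (by omega) s₁'
        have hw'b₂ : (σs s₂ w - w) ((zc b₂).1) = w b₂ * (zc b₂).2 := by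
          apply hstep3 b₂ hb₂mem
          intro b hb hcb hzz
          have hbne : b ≠ s₁' := fun h => hcb ((hzc' b hb).2.2 h)
          have h1 := ((hzc' b hb).2.1 hbne).2.1
          have h2 := ((hzc' b₂ hb₂mem).2.1 hb₂ne).2.1
          exact injnbr ((zc b₂).1) b b₂ (hzz ▸ h1).symm h2.symm
            (by rw [(hsupp b hb).1, (hsupp b₂ hb₂mem).1])
        have hcfb₂ : (zc b₂).2 ≠ 0 := (((hzc' b₂ hb₂mem).2.1) hb₂ne).1
        have hwb₂ : w b₂ ≠ 0 := Finsupp.mem_support_iff.mp hb₂mem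
        have hw'0 : σs s₂ w - w ≠ 0 := by
          intro h
          exact (mul_ne_zero hwb₂ hcfb₂) (by rw [← hw'b₂, h, Finsupp.zero_apply])
        have hw'supp : ∀ x ∈ (σs s₂ w - w).support, p x = s₂ ∧ x ∈ Sset := by
          intro x hx
          obtain ⟨b, hb, hcb, rfl⟩ := hstep2 x (Finsupp.mem_support_iff.mp hx)
          have hbne : b ≠ s₁' := fun h => hcb ((hzc' b hb).2.2 h)
          obtain ⟨-, -, hpz, hSz⟩ := (hzc' b hb).2.1 hbne
          exact ⟨hpz, hSz⟩
        have hw'card : (σs s₂ w - w).support.card < n := by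
          have hsub : (σs s₂ w - w).support ⊆ (w.support.erase s₁').image (fun b => (zc b).1) := by
            intro x hx
            obtain ⟨b, hb, hcb, rfl⟩ := hstep2 x (Finsupp.mem_support_iff.mp hx)
            have hbne : b ≠ s₁' := fun h => hcb ((hzc' b hb).2.2 h)
            exact Finset.mem_image.mpr ⟨b, Finset.mem_erase.mpr ⟨hbne, hb⟩, rfl⟩
          calc (σs s₂ w - w).support.card
              ≤ ((w.support.erase s₁').image (fun b => (zc b).1)).card :=
                Finset.card_le_card hsub
            _ ≤ (w.support.erase s₁').card := Finset.card_image_le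
            _ < w.support.card := Finset.card_erase_lt_of_mem hs1'mem
            _ = n := hcard
        obtain ⟨x₀, hx₀mem, hx₀min⟩ := Finset.exists_min_image (σs s₂ w - w).support
          (fun x => G'.dist x s₁') (Finsupp.support_nonempty_iff.mpr hw'0)
        exact ihn (σs s₂ w - w).support.card hw'card (G'.dist x₀ s₁') s₂ (σs s₂ w - w)
          hstep1 hw'0 hw'supp rfl (fun x hx => hx₀min x hx) ⟨x₀, hx₀mem, rfl⟩
      · -- D ≥ 1
        have hball : ∀ x ∈ w.support, x ≠ s₁' := by
          intro x hx h
          have hm := hmin x hx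
          rw [h, SimpleGraph.dist_self] at hm
          omega
        have hb₁ne : b₁ ≠ s₁' := hball b₁ hb₁mem
        obtain ⟨c₁, hc₁adj, hc₁dist⟩ := S7_toward hconn' hb₁ne
        have hc₁S : c₁ ∈ Sset := stay b₁ c₁ hb₁S hc₁adj (fun h => hb₁ne h.1)
        have hts : (coxeterGraph M).Adj s (p c₁) := by
          rw [← hpb₁]; exact hmorph b₁ c₁ hc₁adj
        have hzc : ∀ b : B', ∃ zc : B' × ℂ, b ∈ w.support →
            (σs (p c₁) (single b (1:ℂ)) - single b 1 = zc.2 • single zc.1 1) ∧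
            zc.2 ≠ 0 ∧ G'.Adj b zc.1 ∧ p zc.1 = p c₁ ∧ zc.1 ∈ Sset := by
          intro b
          by_cases hbmem : b ∈ w.support
          · have hbS := (hsupp b hbmem).2
            have hpb : p b = s := (hsupp b hbmem).1
            obtain ⟨b', hb'adj, hb'p⟩ := exnbr b (p c₁) (by rw [hpb]; exact hts)
            have hb'S : b' ∈ Sset := stay b b' hbS hb'adj (fun h => hball b hbmem h.1)
            obtain ⟨cc, hcc0, hcceq⟩ := edge_act b b' hbS hb'S hb'adj
            rw [hb'p] at hcceq
            refine ⟨(b', cc), fun _ => ⟨?_, hcc0, hb'adj, hb'p, hb'S⟩⟩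
            rw [hcceq]
            abel
          · exact ⟨(b, 0), fun h => absurd h hbmem⟩
        choose zc hzc' using hzc
        obtain ⟨hstep1, hstep2, hstep3⟩ :=
          step (p c₁) w (fun b => (zc b).1) (fun b => (zc b).2) hwU (fun b hb => (hzc' b hb).1)
        have hw'b₁ : (σs (p c₁) w - w) ((zc b₁).1) = w b₁ * (zc b₁).2 := by
          apply hstep3 b₁ hb₁mem
          intro b hb hcb hzz
          have h1 := ((hzc' b hb).2).2.1
          have h2 := ((hzc' b₁ hb₁mem).2).2.1
          exact injnbr ((zc b₁).1) b b₁ (hzz ▸ h1).symm h2.symm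
            (by rw [(hsupp b hb).1, (hsupp b₁ hb₁mem).1])
        have hzb₁ : (zc b₁).1 = c₁ :=
          injnbr b₁ ((zc b₁).1) c₁ ((hzc' b₁ hb₁mem).2).2.1 hc₁adj
            (((hzc' b₁ hb₁mem).2).2.2.1)
        have hcfb₁ : (zc b₁).2 ≠ 0 := ((hzc' b₁ hb₁mem).2).1
        have hwb₁ : w b₁ ≠ 0 := Finsupp.mem_support_iff.mp hb₁mem
        have hw'0 : σs (p c₁) w - w ≠ 0 := by
          intro h
          exact (mul_ne_zero hwb₁ hcfb₁) (by rw [← hw'b₁, h, Finsupp.zero_apply])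
        have hw'supp : ∀ x ∈ (σs (p c₁) w - w).support, p x = p c₁ ∧ x ∈ Sset := by
          intro x hx
          obtain ⟨b, hb, hcb, rfl⟩ := hstep2 x (Finsupp.mem_support_iff.mp hx)
          obtain ⟨-, -, hpz, hSz⟩ := (hzc' b hb).2
          exact ⟨hpz, hSz⟩
        have hw'c₁ : (σs (p c₁) w - w) c₁ = w b₁ * (zc b₁).2 := by
          simpa only [hzb₁] using hw'b₁
        have hc₁mem : c₁ ∈ (σs (p c₁) w - w).support := by
          rw [Finsupp.mem_support_iff, hw'c₁]
          exact mul_ne_zero hwb₁ hcfb₁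
        have hw'cardle : (σs (p c₁) w - w).support.card ≤ n := by
          have hsub : (σs (p c₁) w - w).support ⊆ w.support.image (fun b => (zc b).1) := by
            intro x hx
            obtain ⟨b, hb, hcb, rfl⟩ := hstep2 x (Finsupp.mem_support_iff.mp hx)
            exact Finset.mem_image.mpr ⟨b, hb, rfl⟩
          calc (σs (p c₁) w - w).support.card
              ≤ (w.support.image (fun b => (zc b).1)).card := Finset.card_le_card hsub
            _ ≤ w.support.card := Finset.card_image_le
            _ = n := hcard
        obtain ⟨x₀, hx₀mem, hx₀min⟩ := Finset.exists_min_image (σs (p c₁) w - w).support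
          (fun x => G'.dist x s₁') (Finsupp.support_nonempty_iff.mpr hw'0)
        have hx₀lt : G'.dist x₀ s₁' < D := by
          have h1 := hx₀min c₁ hc₁mem
          omega
        rcases Nat.lt_or_ge ((σs (p c₁) w - w).support.card) n with hlt | hge
        · exact ihn _ hlt (G'.dist x₀ s₁') (p c₁) (σs (p c₁) w - w)
            hstep1 hw'0 hw'supp rfl (fun x hx => hx₀min x hx) ⟨x₀, hx₀mem, rfl⟩
        · have hceq : (σs (p c₁) w - w).support.card = n := le_antisymm hw'cardle hge
          exact ihD (G'.dist x₀ s₁') hx₀lt (p c₁) (σs (p c₁) w - w)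
            hstep1 hw'0 hw'supp hceq (fun x hx => hx₀min x hx) ⟨x₀, hx₀mem, rfl⟩
  -- initial vector
  have hw₀U : σs s₀ v₁ - v₁ ∈ U := Submodule.sub_mem U (hUinv s₀ v₁ hv₁U) hv₁U
  have hw₀0 : σs s₀ v₁ - v₁ ≠ 0 := sub_ne_zero_of_ne hs₀
  have hw₀supp : ∀ x ∈ (σs s₀ v₁ - v₁).support, p x = s₀ ∧ x ∈ Sset := by
    intro x hx
    by_contra hcon
    apply Finsupp.mem_support_iff.mp hx
    rw [Finsupp.sub_apply, S7_eval_sub]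
    apply Finset.sum_eq_zero
    intro b hb
    have hbS := hv₁S b hb
    rcases master s₀ b hbS with ⟨hpb, heq⟩ | heq | ⟨c, -, b', hpb', hb'S, heq⟩
    · rw [heq]
      by_cases hxb : b = x
      · exact absurd (hxb ▸ ⟨hpb, hbS⟩) hcon
      · rw [Finsupp.neg_apply, Finsupp.single_apply, if_neg hxb]
        ring
    · rw [heq]; ring
    · rw [heq]
      by_cases hxb : b' = x
      · exact absurd (hxb ▸ ⟨hpb', hb'S⟩) hcon
      · simp [Finsupp.add_apply, Finsupp.smul_apply, Finsupp.single_apply, hxb]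
  obtain ⟨x₀, hx₀mem, hx₀min⟩ := Finset.exists_min_image (σs s₀ v₁ - v₁).support
    (fun x => G'.dist x s₁') (Finsupp.support_nonempty_iff.mpr hw₀0)
  obtain ⟨b, hbS, hbU⟩ := reduce ((σs s₀ v₁ - v₁).support.card) (G'.dist x₀ s₁') s₀
    (σs s₀ v₁ - v₁) hw₀U hw₀0 hw₀supp rfl (fun x hx => hx₀min x hx) ⟨x₀, hx₀mem, rfl⟩
  -- walk to s₁'
  have walk : ∀ k : ℕ, ∀ b', b' ∈ Sset → G'.dist b' s₁' = k → single b' (1:ℂ) ∈ U →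
      single s₁' (1:ℂ) ∈ U := by
    intro k
    induction k with
    | zero =>
      intro b' _ hd hUb
      rwa [(hconn'.dist_eq_zero_iff).mp hd] at hUb
    | succ k ih =>
      intro b' hbS' hd hUb
      have hbne : b' ≠ s₁' := by
        intro h
        rw [h, SimpleGraph.dist_self] at hd
        omega
      obtain ⟨c, hadj, hcd⟩ := S7_toward hconn' hbne
      have hcS := stay b' c hbS' hadj (fun h => hbne h.1)
      obtain ⟨cc, hcc0, hcceq⟩ := edge_act b' c hbS' hcS hadj
      have hcU : single c (1:ℂ) ∈ U := by
        have h1 : cc • single c (1:ℂ) = σs (p c) (single b' 1) - single b' 1 := by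
          rw [hcceq]; abel
        have h2 : σs (p c) (single b' (1:ℂ)) - single b' 1 ∈ U :=
          Submodule.sub_mem U (hUinv (p c) _ hUb) hUb
        rw [← h1] at h2
        have h3 := Submodule.smul_mem U cc⁻¹ h2
        rwa [smul_smul, inv_mul_cancel₀ hcc0, one_smul] at h3
      exact ih c hcS (by omega) hcU
  have hbase : single s₁' (1:ℂ) ∈ U := walk (G'.dist b s₁') b hbS rfl hbU
  have spread : ∀ k : ℕ, ∀ a, a ∈ Sset → G'.dist a s₁' = k → single a (1:ℂ) ∈ U := by
    intro k
    induction k with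
    | zero =>
      intro a _ hd
      rwa [(hconn'.dist_eq_zero_iff).mp hd]
    | succ k ih =>
      intro a haS hd
      have hane : a ≠ s₁' := by
        intro h
        rw [h, SimpleGraph.dist_self] at hd
        omega
      obtain ⟨c, hadj, hcd⟩ := S7_toward hconn' hane
      have hcS := stay a c haS hadj (fun h => hane h.1)
      have hcU := ih c hcS (by omega)
      obtain ⟨cc, hcc0, hcceq⟩ := edge_act c a hcS haS hadj.symm
      have h1 : cc • single a (1:ℂ) = σs (p a) (single c 1) - single c 1 := by
        rw [hcceq]; abel
      have h2 : σs (p a) (single c (1:ℂ)) - single c 1 ∈ U :=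
        Submodule.sub_mem U (hUinv (p a) _ hcU) hcU
      rw [← h1] at h2
      have h3 := Submodule.smul_mem U cc⁻¹ h2
      rwa [smul_smul, inv_mul_cancel₀ hcc0, one_smul] at h3
  apply le_antisymm
  · rw [hU, Submodule.span_le]
    rintro u ⟨g, rfl⟩
    exact part1 g v₁ hv₁
  · rw [Finsupp.supported_eq_span_single, Submodule.span_le]
    rintro u ⟨a, haS, rfl⟩
    exact spread (G'.dist a s₁') a haS rfl
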